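/- arXiv:2512.16952 — 5 statements merged into one kernel-verified Lean document; each statement's English description precedes it below -/
import Mathlib

section
/- Let m ≥ 1 and f ∈ H^∞(𝔻). If g ∈ L²_a(𝔻) satisfies T_{z̄^m + f} g = 0 and the first m Taylor coefficients of g at 0 all vanish (i.e., g(0) = g'(0) = ⋯ = g^{(m-1)}(0) = 0), then g ≡ 0. -/
open MeasureTheory Metric Complex
open scoped Real Topology ENNReal NNReal

/-- The normalized Lebesgue area measure on the unit disk `𝔻 ⊆ ℂ`. -/
noncomputable def dA : Measure ℂ :=
  (ENNReal.ofReal Real.pi)⁻¹ • (volume.restrict (ball (0 : ℂ) 1))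

/-- A function belongs to the Bergman space `L²ₐ(𝔻)`: it is analytic on the unit
disk and square-integrable with respect to the normalized area measure. -/
def InBergman (f : ℂ → ℂ) : Prop :=
  DifferentiableOn ℂ f (ball (0 : ℂ) 1) ∧ MemLp f 2 dA

/-- `IsToeplitz φ g h` expresses `T_φ g = h`, i.e. `h = P (φ · g)` where `P` is the
Bergman (orthogonal) projection: `h` lies in the Bergman space and `φ g - h` is
orthogonal to every Bergman space function. -/
def IsToeplitz (φ g h : ℂ → ℂ) : Prop :=
  InBergman h ∧ ∀ u : ℂ → ℂ, InBergman u →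
    ∫ z, (φ z * g z - h z) * (starRingEnd ℂ) (u z) ∂dA = 0

/-- `f ∈ H^∞(𝔻)`: bounded and analytic on the unit disk. -/
def BoundedAnalytic (f : ℂ → ℂ) : Prop :=
  DifferentiableOn ℂ f (ball (0 : ℂ) 1) ∧ ∃ C : ℝ, ∀ z ∈ ball (0 : ℂ) 1, ‖f z‖ ≤ C


lemma integral_ball_comp_rotation (c : Circle) (F : ℂ → ℂ) (r : ℝ) :
    ∫ z in ball (0:ℂ) r, F ((c : ℂ) * z) = ∫ z in ball (0:ℂ) r, F z := by
  have h : MeasurePreserving (rotation c) volume volume :=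
    (rotation c).measurePreserving
  have he : MeasurableEmbedding (rotation c) :=
    (rotation c).toHomeomorph.measurableEmbedding
  have hb : (rotation c) ⁻¹' (ball (0:ℂ) r) = ball (0:ℂ) r := by
    rw [(rotation c).preimage_ball (0:ℂ) r, map_zero]
  calc ∫ z in ball (0:ℂ) r, F ((c : ℂ) * z)
      = ∫ z in (rotation c) ⁻¹' (ball (0:ℂ) r), F (rotation c z) := by
        rw [hb]; simp [rotation_apply]
    _ = ∫ z in ball (0:ℂ) r, F z := h.setIntegral_preimage_emb he F _

lemma integral_monomial_ne {n k : ℕ} (hnk : n ≠ k) (r : ℝ) :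
    (∫ z in ball (0:ℂ) r, z ^ n * (starRingEnd ℂ) z ^ k) = 0 := by
  set d : ℤ := (n : ℤ) - k with hdd
  have hd0 : d ≠ 0 := sub_ne_zero.2 (by exact_mod_cast hnk)
  have hdR : (d : ℝ) ≠ 0 := Int.cast_ne_zero.2 hd0
  set θ : ℝ := Real.pi / d with hθ
  set c : ℂ := Complex.exp (θ * Complex.I) with hc
  have habs : ‖c‖ = 1 := by
    rw [hc, Complex.norm_exp]
    simp
  have hc0 : c ≠ 0 := Complex.exp_ne_zero _
  have hconj : (starRingEnd ℂ) c = c⁻¹ := by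
    rw [Complex.inv_def, Complex.normSq_eq_norm_sq, habs]
    simp
  have hcd : c ^ d = -1 := by
    have hdC : (d:ℂ) ≠ 0 := by exact_mod_cast hdR
    rw [hc, ← Complex.exp_int_mul, ← Complex.exp_pi_mul_I]
    congr 1
    rw [hθ]
    push_cast
    field_simp
  have hkey : c ^ n * ((starRingEnd ℂ) c) ^ k = -1 := by
    rw [hconj, ← zpow_natCast c n, ← zpow_natCast c⁻¹ k, inv_zpow, ← zpow_neg, ← zpow_add₀ hc0]
    have he : (n:ℤ) + -(k:ℤ) = d := by rw [hdd]; ring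
    rw [he, hcd]
  have hcirc : c ∈ Metric.sphere (0:ℂ) 1 := by
    simp [habs]
  have h := integral_ball_comp_rotation ⟨c, hcirc⟩
    (fun z => z ^ n * (starRingEnd ℂ) z ^ k) r
  simp only [mul_pow, map_mul] at h
  have h2 : ∀ z : ℂ, c ^ n * z ^ n * (((starRingEnd ℂ) c) ^ k * ((starRingEnd ℂ) z) ^ k)
      = (c ^ n * ((starRingEnd ℂ) c) ^ k) * (z ^ n * ((starRingEnd ℂ) z) ^ k) := by
    intro z; ring
  simp only [h2, hkey, neg_one_mul] at h
  rw [integral_neg] at h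
  have h3 : (∫ (z : ℂ) in ball 0 r, z ^ n * (starRingEnd ℂ) z ^ k)
      = -∫ (z : ℂ) in ball 0 r, z ^ n * (starRingEnd ℂ) z ^ k := h.symm
  linear_combination h3 / 2

lemma integrableOn_ball_of_continuous {F : ℂ → ℂ} (hF : Continuous F) (r : ℝ) :
    IntegrableOn F (ball (0:ℂ) r) volume :=
  ((hF.continuousOn).integrableOn_compact (isCompact_closedBall 0 r)).mono_set
    ball_subset_closedBall

lemma integral_monomial_diag (k : ℕ) (r : ℝ) :
    (∫ z in ball (0:ℂ) r, z ^ k * (starRingEnd ℂ) z ^ k)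
      = ((∫ z in ball (0:ℂ) r, Complex.normSq z ^ k : ℝ) : ℂ) := by
  have h : ∀ z : ℂ, z ^ k * (starRingEnd ℂ) z ^ k = ((Complex.normSq z ^ k : ℝ) : ℂ) := by
    intro z; rw [← mul_pow, Complex.mul_conj]; push_cast; ring
  simp only [h]
  exact integral_ofReal

lemma integral_diag_pos (k : ℕ) {r : ℝ} (hr : 0 < r) :
    0 < ∫ z in ball (0:ℂ) r, Complex.normSq z ^ k := by
  have hcont : Continuous fun z : ℂ => Complex.normSq z ^ k :=
    (Complex.continuous_normSq).pow k
  have hint : IntegrableOn (fun z : ℂ => Complex.normSq z ^ k) (ball (0:ℂ) r) volume :=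
    ((hcont.continuousOn).integrableOn_compact (isCompact_closedBall 0 r)).mono_set
      ball_subset_closedBall
  rw [setIntegral_pos_iff_support_of_nonneg_ae ?pos hint]
  case pos =>
    filter_upwards with z
    exact pow_nonneg (Complex.normSq_nonneg z) k
  have hsub : ball (0:ℂ) r \ {0}
      ⊆ (Function.support fun z : ℂ => Complex.normSq z ^ k) ∩ ball (0:ℂ) r := by
    rintro z ⟨h1, h2⟩
    refine ⟨?_, h1⟩
    simp only [Set.mem_singleton_iff] at h2
    have : Complex.normSq z ≠ 0 := fun h => h2 (Complex.normSq_eq_zero.mp h)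
    have : 0 < Complex.normSq z ^ k :=
      pow_pos (lt_of_le_of_ne (Complex.normSq_nonneg z) (Ne.symm this)) k
    exact ne_of_gt this
  calc (0:ℝ≥0∞) < volume (ball (0:ℂ) r \ {0}) := by
        rw [measure_diff_null (measure_singleton 0)]
        exact measure_ball_pos volume 0 hr
    _ ≤ _ := measure_mono hsub

lemma exists_series {F : ℂ → ℂ} (hF : DifferentiableOn ℂ F (ball (0:ℂ) 1)) :
    ∃ p : FormalMultilinearSeries ℂ ℂ ℂ, ∀ r : ℝ≥0, 0 < r → (r:ℝ) < 1 →
      HasFPowerSeriesOnBall F p 0 r := by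
  have H : ∀ r : ℝ≥0, 0 < r → (r:ℝ) < 1 →
      HasFPowerSeriesOnBall F (cauchyPowerSeries F 0 r) 0 r := by
    intro r h0 h1
    have hsub : closedBall (0:ℂ) (r:ℝ) ⊆ ball (0:ℂ) 1 := closedBall_subset_ball h1
    exact (hF.mono hsub).hasFPowerSeriesOnBall h0
  refine ⟨cauchyPowerSeries F 0 (1/2 : ℝ≥0), fun r h0 h1 => ?_⟩
  have h2 := H (1/2 : ℝ≥0) (by norm_num) (by norm_num)
  have h3 := H r h0 h1
  rw [← h3.hasFPowerSeriesAt.eq_formalMultilinearSeries h2.hasFPowerSeriesAt]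
  exact h3

lemma key_interchange {w F : ℂ → ℂ} (hw : ContinuousOn w (ball (0:ℂ) 1))
    {p : FormalMultilinearSeries ℂ ℂ ℂ}
    (hp : ∀ r : ℝ≥0, 0 < r → (r:ℝ) < 1 → HasFPowerSeriesOnBall F p 0 r)
    (n k : ℕ) {r : ℝ≥0} (h0 : 0 < r) (h1 : (r:ℝ) < 1) :
    ∫ z in ball (0:ℂ) (r:ℝ), w z * F z * z ^ n * (starRingEnd ℂ) z ^ k
      = ∑' j, p.coeff j *
          ∫ z in ball (0:ℂ) (r:ℝ), w z * z ^ (j+n) * (starRingEnd ℂ) z ^ k := by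
  set r' : ℝ≥0 := (r + 1) / 2 with hr'
  have hrr' : (r:ℝ) < (r':ℝ) := by rw [hr']; push_cast; linarith
  have hr'1 : (r':ℝ) < 1 := by rw [hr']; push_cast; linarith
  have hr'0 : 0 < r' := lt_of_le_of_lt r.2 (by exact_mod_cast hrr')
  have hball := hp r' hr'0 hr'1
  have hrad : (r : ℝ≥0∞) < p.radius :=
    lt_of_lt_of_le (by exact_mod_cast hrr') hball.r_le
  have hsum : ∀ z ∈ ball (0:ℂ) (r:ℝ), HasSum (fun j => p.coeff j * z ^ j) (F z) := by
    intro z hz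
    have hz' : z ∈ Metric.eball (0:ℂ) (r' : ℝ≥0∞) := by
      rw [Metric.emetric_ball_nnreal]
      exact mem_ball_zero_iff.2 (lt_trans (mem_ball_zero_iff.1 hz) hrr')
    have h2 := hball.hasSum hz'
    have h3 : ∀ j, (p j fun _ => z) = p.coeff j * z ^ j := by
      intro j
      rw [FormalMultilinearSeries.apply_eq_pow_smul_coeff, smul_eq_mul]; ring
    simpa [h3] using h2
  obtain ⟨C, hC⟩ : ∃ C, ∀ z ∈ closedBall (0:ℂ) (r:ℝ), ‖w z‖ ≤ C :=
    (isCompact_closedBall (0:ℂ) (r:ℝ)).exists_bound_of_continuousOn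
      (hw.mono (closedBall_subset_ball h1))
  set C' : ℝ := max C 0 with hC'
  set D : ℝ := C' * (r:ℝ) ^ (n + k) with hD
  set Fn : ℕ → ℂ → ℂ :=
    fun j z => p.coeff j * (w z * z ^ (j+n) * (starRingEnd ℂ) z ^ k) with hFn
  have hwcb : ContinuousOn w (closedBall (0:ℂ) (r:ℝ)) :=
    hw.mono (closedBall_subset_ball h1)
  have hFint : ∀ j, IntegrableOn (Fn j) (ball (0:ℂ) (r:ℝ)) volume := by
    intro j
    apply Integrable.const_mul
    have hcont : ContinuousOn (fun z : ℂ => w z * z ^ (j+n) * (starRingEnd ℂ) z ^ k)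
        (closedBall (0:ℂ) (r:ℝ)) :=
      (hwcb.mul ((continuous_pow (j+n)).continuousOn)).mul
        ((Complex.continuous_conj.pow k).continuousOn)
    exact (hcont.integrableOn_compact (isCompact_closedBall 0 _)).mono_set
      ball_subset_closedBall
  have hbound : ∀ j, ∀ z ∈ ball (0:ℂ) (r:ℝ),
      ‖Fn j z‖ ≤ ‖p.coeff j‖ * (r:ℝ) ^ j * D := by
    intro j z hz
    have hzr : ‖z‖ ≤ (r:ℝ) := le_of_lt (mem_ball_zero_iff.1 hz)
    have hwz : ‖w z‖ ≤ C' :=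
      le_trans (hC z (ball_subset_closedBall hz)) (le_max_left _ _)
    have hnorm : ‖Fn j z‖ = ‖p.coeff j‖ * (‖w z‖ * ‖z‖ ^ (j+n) * ‖z‖ ^ k) := by
      simp [hFn, norm_mul, norm_pow]
    rw [hnorm]
    calc ‖p.coeff j‖ * (‖w z‖ * ‖z‖ ^ (j+n) * ‖z‖ ^ k)
        ≤ ‖p.coeff j‖ * (C' * (r:ℝ) ^ (j+n) * (r:ℝ) ^ k) := by
          gcongr <;> first | exact norm_nonneg _ | exact le_trans (norm_nonneg _) hwz
      _ = ‖p.coeff j‖ * (r:ℝ) ^ j * D := by rw [hD]; simp only [pow_add]; ring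
  have hsummable : Summable
      (fun j => ‖p.coeff j‖ * (r:ℝ) ^ j * (D * (volume (ball (0:ℂ) (r:ℝ))).toReal)) := by
    apply Summable.mul_right
    have := p.summable_norm_mul_pow hrad
    simpa [FormalMultilinearSeries.norm_apply_eq_norm_coef] using this
  have hInorm : ∀ j, (∫ z in ball (0:ℂ) (r:ℝ), ‖Fn j z‖)
      ≤ ‖p.coeff j‖ * (r:ℝ) ^ j * (D * (volume (ball (0:ℂ) (r:ℝ))).toReal) := by
    intro j
    have hb := norm_setIntegral_le_of_norm_le_const (μ := volume)
      (s := ball (0:ℂ) (r:ℝ)) (f := fun z => ‖Fn j z‖) measure_ball_lt_top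
      (C := ‖p.coeff j‖ * (r:ℝ) ^ j * D)
      (fun z hz => by rw [norm_norm]; exact hbound j z hz)
    rw [Real.norm_eq_abs] at hb
    calc (∫ z in ball (0:ℂ) (r:ℝ), ‖Fn j z‖)
        ≤ |∫ z in ball (0:ℂ) (r:ℝ), ‖Fn j z‖| := le_abs_self _
      _ ≤ ‖p.coeff j‖ * (r:ℝ) ^ j * D * (volume (ball (0:ℂ) (r:ℝ))).toReal := hb
      _ = _ := by ring
  have hsum2 : Summable (fun j => ∫ z in ball (0:ℂ) (r:ℝ), ‖Fn j z‖) :=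
    Summable.of_nonneg_of_le (fun j => integral_nonneg (fun z => norm_nonneg _))
      hInorm hsummable
  have hint := MeasureTheory.integral_tsum_of_summable_integral_norm
    (μ := volume.restrict (ball (0:ℂ) (r:ℝ))) hFint hsum2
  have hptwise : Set.EqOn (fun z => w z * F z * z ^ n * (starRingEnd ℂ) z ^ k)
      (fun z => ∑' j, Fn j z) (ball (0:ℂ) (r:ℝ)) := by
    intro z hz
    have hs := (hsum z hz).mul_right (w z * z ^ n * (starRingEnd ℂ) z ^ k)
    have hs2 : HasSum (fun j => Fn j z)
        (F z * (w z * z ^ n * (starRingEnd ℂ) z ^ k)) := by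
      have hfun : (fun j => Fn j z) = fun i => p.coeff i * z ^ i * (w z * z ^ n * (starRingEnd ℂ) z ^ k) := by
        funext j
        rw [hFn]
        simp only [pow_add]
        ring
      rw [hfun]; exact hs
    simp only
    rw [hs2.tsum_eq]
    ring
  calc ∫ z in ball (0:ℂ) (r:ℝ), w z * F z * z ^ n * (starRingEnd ℂ) z ^ k
      = ∫ z in ball (0:ℂ) (r:ℝ), ∑' j, Fn j z :=
        setIntegral_congr_fun measurableSet_ball hptwise
    _ = ∑' j, ∫ z in ball (0:ℂ) (r:ℝ), Fn j z := hint.symm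
    _ = ∑' j, p.coeff j *
          ∫ z in ball (0:ℂ) (r:ℝ), w z * z ^ (j+n) * (starRingEnd ℂ) z ^ k := by
        exact tsum_congr fun j => integral_const_mul _ _

lemma integral_mono_coeff {F : ℂ → ℂ}
    {p : FormalMultilinearSeries ℂ ℂ ℂ}
    (hp : ∀ r : ℝ≥0, 0 < r → (r:ℝ) < 1 → HasFPowerSeriesOnBall F p 0 r)
    (n k : ℕ) {r : ℝ≥0} (h0 : 0 < r) (h1 : (r:ℝ) < 1) :
    ∫ z in ball (0:ℂ) (r:ℝ), F z * z ^ n * (starRingEnd ℂ) z ^ k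
      = (if n ≤ k then p.coeff (k-n) else 0) *
          ∫ z in ball (0:ℂ) (r:ℝ), z ^ k * (starRingEnd ℂ) z ^ k := by
  have h := key_interchange (w := fun _ => (1:ℂ))
    (continuous_const.continuousOn) hp n k h0 h1
  simp only [one_mul] at h
  rw [h]
  by_cases hnk : n ≤ k
  · rw [if_pos hnk]
    rw [tsum_eq_single (k - n) ?side]
    · have hkn : k - n + n = k := by omega
      rw [hkn]
    case side =>
      intro j hj
      have : j + n ≠ k := by omega
      rw [integral_monomial_ne this, mul_zero]
  · rw [if_neg hnk, zero_mul]
    have hterm : ∀ j : ℕ, p.coeff j *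
        (∫ z in ball (0:ℂ) (r:ℝ), z ^ (j+n) * (starRingEnd ℂ) z ^ k) = 0 := by
      intro j
      have : j + n ≠ k := by omega
      rw [integral_monomial_ne this, mul_zero]
    simp only [hterm, tsum_zero]

noncomputable def rad (i : ℕ) : ℝ := 1 - 1/(i+2)

lemma rad_pos (i : ℕ) : 0 < rad i := by
  unfold rad
  have h2 : (1:ℝ) ≤ (i:ℝ) + 2 := by
    have : (0:ℝ) ≤ (i:ℝ) := Nat.cast_nonneg i
    linarith
  have h3 : 1/((i:ℝ)+2) ≤ 1 := by
    rw [div_le_one (by linarith)]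
    exact h2
  have h4 : 1/((i:ℝ)+2) < 1 := by
    rw [div_lt_one (by linarith)]
    have : (0:ℝ) ≤ (i:ℝ) := Nat.cast_nonneg i
    linarith
  linarith

lemma rad_lt_one (i : ℕ) : rad i < 1 := by
  unfold rad
  have : (0:ℝ) < 1/(i+2) := by positivity
  linarith

lemma tendsto_ball_integral {G : ℂ → ℂ} (hG : IntegrableOn G (ball (0:ℂ) 1) volume) :
    Filter.Tendsto (fun i : ℕ => ∫ z in ball (0:ℂ) (rad i), G z) Filter.atTop
      (nhds (∫ z in ball (0:ℂ) 1, G z)) := by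
  have hmono : Monotone (fun i : ℕ => ball (0:ℂ) (rad i)) := by
    intro i j hij
    apply ball_subset_ball
    unfold rad
    have h1 : (i:ℝ) + 2 ≤ (j:ℝ) + 2 := by exact_mod_cast by omega
    have h2 : (0:ℝ) < (i:ℝ) + 2 := by positivity
    have := one_div_le_one_div_of_le h2 h1
    linarith
  have hU : (⋃ i, ball (0:ℂ) (rad i)) = ball (0:ℂ) 1 := by
    apply Set.Subset.antisymm
    · exact Set.iUnion_subset fun i => ball_subset_ball (le_of_lt (rad_lt_one i))
    · intro z hz
      rw [mem_ball_zero_iff] at hz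
      obtain ⟨n, hn⟩ := exists_nat_one_div_lt (show (0:ℝ) < 1 - ‖z‖ by linarith)
      refine Set.mem_iUnion.2 ⟨n, mem_ball_zero_iff.2 ?_⟩
      unfold rad
      have : 1/((n:ℝ)+2) ≤ 1/((n:ℝ)+1) := by
        apply one_div_le_one_div_of_le <;> [positivity; linarith]
      have hn' : 1/((n:ℝ)+1) < 1 - ‖z‖ := hn
      linarith
  have h := tendsto_setIntegral_of_monotone
    (s := fun i : ℕ => ball (0:ℂ) (rad i)) (fun i => measurableSet_ball) hmono
    (by rw [hU]; exact hG)
  rwa [hU] at h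


theorem toeplitz_kernel_trivial_of_vanishing_jet (m : ℕ) (hm : 1 ≤ m)
    (f g : ℂ → ℂ) (hf : BoundedAnalytic f) (hg : InBergman g)
    (hker : IsToeplitz (fun z => (starRingEnd ℂ) z ^ m + f z) g 0)
    (hg0 : ∀ j < m, iteratedDeriv j g 0 = 0) :
    ∀ z ∈ ball (0 : ℂ) 1, g z = 0 := by
  obtain ⟨hgd, hgL2⟩ := hg
  obtain ⟨hfd, C, hfC⟩ := hf
  obtain ⟨p, hp⟩ := exists_series hgd
  obtain ⟨q, hq⟩ := exists_series hfd
  have hπ : (0:ℝ) < Real.pi := Real.pi_pos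
  have hπ0 : ENNReal.ofReal Real.pi ≠ 0 := by
    simp only [ne_eq, ENNReal.ofReal_eq_zero, not_le]; linarith
  have hc0 : (ENNReal.ofReal Real.pi)⁻¹ ≠ 0 := ENNReal.inv_ne_zero.2 ENNReal.ofReal_ne_top
  have hcT : (ENNReal.ofReal Real.pi)⁻¹ ≠ ⊤ := by
    rw [ne_eq, ENNReal.inv_eq_top]
    exact hπ0
  have hdA : dA = (ENNReal.ofReal Real.pi)⁻¹ • (volume.restrict (ball (0:ℂ) 1)) := rfl
  haveI hdAfin : IsFiniteMeasure dA := by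
    constructor
    rw [hdA, Measure.smul_apply, smul_eq_mul, Measure.restrict_apply_univ]
    exact ENNReal.mul_lt_top hcT.lt_top measure_ball_lt_top
  have hgInt : IntegrableOn g (ball (0:ℂ) 1) volume := by
    have h3 : Integrable g dA := hgL2.integrable one_le_two
    rw [hdA] at h3
    exact (integrable_smul_measure hc0 hcT).mp h3
  have hmono_berg : ∀ k : ℕ, InBergman (fun z => z ^ k) := by
    intro k
    refine ⟨(differentiable_pow k).differentiableOn, ?_⟩
    apply MemLp.of_bound ((continuous_pow k).aestronglyMeasurable) 1
    rw [hdA]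
    apply MeasureTheory.Measure.ae_smul_measure
    rw [ae_restrict_iff' measurableSet_ball]
    filter_upwards with z hzball
    rw [norm_pow]
    exact pow_le_one₀ (norm_nonneg z) (le_of_lt (mem_ball_zero_iff.1 hzball))
  have horth : ∀ k : ℕ, (∫ z in ball (0:ℂ) 1,
      (g z * (starRingEnd ℂ) z ^ (m+k) + f z * g z * (starRingEnd ℂ) z ^ k)) = 0 := by
    intro k
    have h := hker.2 (fun z => z ^ k) (hmono_berg k)
    rw [hdA, integral_smul_measure, smul_eq_zero] at h
    have hct : ((ENNReal.ofReal Real.pi)⁻¹).toReal ≠ 0 := by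
      rw [ENNReal.toReal_inv, ENNReal.toReal_ofReal hπ.le]
      exact inv_ne_zero (ne_of_gt hπ)
    rcases h with h | h
    · exact absurd h hct
    refine Eq.trans (setIntegral_congr_fun measurableSet_ball ?_) h
    intro z _
    simp only [Pi.zero_apply, sub_zero, map_pow, pow_add]
    ring
  have hIg : ∀ J : ℕ, IntegrableOn (fun z => g z * (starRingEnd ℂ) z ^ J)
      (ball (0:ℂ) 1) volume := by
    intro J
    have hb : Integrable (fun z => (starRingEnd ℂ) z ^ J * g z)
        (volume.restrict (ball (0:ℂ) 1)) := by
      apply Integrable.bdd_mul (f := fun z => (starRingEnd ℂ) z ^ J) (c := 1) hgInt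
        ((Complex.continuous_conj.pow J).aestronglyMeasurable)
      rw [ae_restrict_iff' measurableSet_ball]
      filter_upwards with z hz
      rw [norm_pow, RCLike.norm_conj]
      exact pow_le_one₀ (norm_nonneg z) (le_of_lt (mem_ball_zero_iff.1 hz))
    exact hb.congr (Filter.Eventually.of_forall fun z => mul_comm _ _)
  have hIfg : ∀ k : ℕ, IntegrableOn (fun z => f z * g z * (starRingEnd ℂ) z ^ k)
      (ball (0:ℂ) 1) volume := by
    intro k
    have hb : Integrable (fun z => f z * (g z * (starRingEnd ℂ) z ^ k))
        (volume.restrict (ball (0:ℂ) 1)) := by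
      apply Integrable.bdd_mul (c := C) (hIg k)
        (hfd.continuousOn.aestronglyMeasurable measurableSet_ball)
      rw [ae_restrict_iff' measurableSet_ball]
      filter_upwards with z hz
      exact hfC z hz
    exact hb.congr (Filter.Eventually.of_forall fun z => (mul_assoc _ _ _).symm)
  -- all Taylor coefficients of g vanish
  have hcoeff : ∀ n : ℕ, p.coeff n = 0 := by
    intro n
    induction n using Nat.strong_induction_on with
    | _ n IH =>
    by_cases hn : n < m
    · have hball := hp (1/2 : ℝ≥0) (by norm_num) (by norm_num)
      have h1 := hball.factorial_smul (1:ℂ) n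
      rw [← iteratedDeriv_eq_iteratedFDeriv, hg0 n hn] at h1
      have h2 : (p n fun _ => (1:ℂ)) = p.coeff n := rfl
      rw [h2, smul_eq_zero] at h1
      rcases h1 with h1 | h1
      · exact absurd h1 (Nat.factorial_ne_zero n)
      · exact h1
    · push_neg at hn
      set k := n - m with hk
      have hmk : m + k = n := by omega
      have hstep : ∀ i : ℕ, (∫ z in ball (0:ℂ) (rad i),
          (g z * (starRingEnd ℂ) z ^ (m+k) + f z * g z * (starRingEnd ℂ) z ^ k))
          = p.coeff (m+k) *
            ∫ z in ball (0:ℂ) (rad i), z^(m+k) * (starRingEnd ℂ) z ^ (m+k) := by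
        intro i
        set R : ℝ≥0 := Real.toNNReal (rad i) with hR
        have hRr : (R:ℝ) = rad i := Real.coe_toNNReal _ (le_of_lt (rad_pos i))
        have hR0 : 0 < R := Real.toNNReal_pos.2 (rad_pos i)
        have hR1 : (R:ℝ) < 1 := by rw [hRr]; exact rad_lt_one i
        rw [← hRr]
        have hsub : ball (0:ℂ) (R:ℝ) ⊆ ball (0:ℂ) 1 := ball_subset_ball hR1.le
        have hI1 : IntegrableOn (fun z => g z * (starRingEnd ℂ) z ^ (m+k))
            (ball (0:ℂ) (R:ℝ)) volume := (hIg (m+k)).mono_set hsub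
        have hI2 : IntegrableOn (fun z => f z * g z * (starRingEnd ℂ) z ^ k)
            (ball (0:ℂ) (R:ℝ)) volume := (hIfg k).mono_set hsub
        rw [integral_add hI1 hI2]
        have e1 : (∫ z in ball (0:ℂ) (R:ℝ), g z * (starRingEnd ℂ) z ^ (m+k))
            = p.coeff (m+k) *
              ∫ z in ball (0:ℂ) (R:ℝ), z^(m+k) * (starRingEnd ℂ) z ^ (m+k) := by
          have h := integral_mono_coeff hp 0 (m+k) hR0 hR1
          simpa using h
        have e2 : (∫ z in ball (0:ℂ) (R:ℝ), f z * g z * (starRingEnd ℂ) z ^ k) = 0 := by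
          have h := key_interchange (w := f) hfd.continuousOn hp 0 k hR0 hR1
          have hz : ∀ j : ℕ, p.coeff j *
              (∫ z in ball (0:ℂ) (R:ℝ), f z * z^(j+0) * (starRingEnd ℂ) z ^ k) = 0 := by
            intro j
            by_cases hjk : j ≤ k
            · rw [IH j (by omega), zero_mul]
            · rw [integral_mono_coeff hq (j+0) k hR0 hR1, if_neg (by omega), zero_mul,
                mul_zero]
          have hzero : (∑' j, p.coeff j *
              ∫ z in ball (0:ℂ) (R:ℝ), f z * z^(j+0) * (starRingEnd ℂ) z ^ k) = 0 := by
            rw [tsum_congr hz, tsum_zero]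
          have h3 := h.trans hzero
          simpa using h3
        rw [e1, e2, add_zero]
      have hDiagInt : IntegrableOn
          (fun z : ℂ => z^(m+k) * (starRingEnd ℂ) z ^ (m+k)) (ball (0:ℂ) 1) volume :=
        integrableOn_ball_of_continuous
          ((continuous_pow (m+k)).mul (Complex.continuous_conj.pow (m+k))) 1
      have hIsum : IntegrableOn (fun z => g z * (starRingEnd ℂ) z ^ (m+k)
          + f z * g z * (starRingEnd ℂ) z ^ k) (ball (0:ℂ) 1) volume :=
        (hIg (m+k)).add (hIfg k)
      have hlim1 := tendsto_ball_integral hIsum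
      rw [horth k] at hlim1
      have hlim2 := (tendsto_ball_integral hDiagInt).const_mul (p.coeff (m+k))
      have hfinal := tendsto_nhds_unique (hlim1.congr hstep) hlim2
      have hDne : (∫ z in ball (0:ℂ) 1, z^(m+k) * (starRingEnd ℂ) z ^ (m+k)) ≠ 0 := by
        rw [integral_monomial_diag]
        exact_mod_cast ne_of_gt (integral_diag_pos (m+k) one_pos)
      have := mul_eq_zero.mp hfinal.symm
      rcases this with h | h
      · rw [← hmk]; exact h
      · exact absurd h hDne
  intro z hz
  set R : ℝ≥0 := Real.toNNReal ((‖z‖ + 1)/2) with hR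
  have hz1 : ‖z‖ < 1 := mem_ball_zero_iff.1 hz
  have hRr : (R:ℝ) = (‖z‖ + 1)/2 := Real.coe_toNNReal _ (by positivity)
  have hR0 : 0 < R := Real.toNNReal_pos.2 (by positivity)
  have hR1 : (R:ℝ) < 1 := by rw [hRr]; linarith
  have hball := hp R hR0 hR1
  have hzR : z ∈ Metric.eball (0:ℂ) (R : ℝ≥0∞) := by
    rw [Metric.emetric_ball_nnreal]
    rw [mem_ball_zero_iff, hRr]
    linarith
  have hs := hball.hasSum hzR
  have h3 : ∀ j, (p j fun _ => z) = 0 := by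
    intro j
    rw [FormalMultilinearSeries.apply_eq_pow_smul_coeff, hcoeff j, smul_zero]
  rw [funext h3] at hs
  have := hs.unique hasSum_zero
  simpa using this
end

section
/- For m ≥ 1, n ≥ 0, j with 0 ≤ j ≤ m−1, and c ∈ ℂ, the series Σ_{k≥1} |c|^{2k} (Π_{i=1}^k (i(m+n)+1+j)²/(i n + (i−1)m + 1 + j)²) · 1/(k(m+n)+1) converges if |c| < 1 and diverges if |c| ≥ 1. -/
open MeasureTheory Metric Complex

lemma telescope_prod (L : ℕ) :
    ∏ i ∈ Finset.Icc 1 L, (((i : ℝ) + 1) / (i : ℝ)) = L + 1 := by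
  induction L with
  | zero => simp
  | succ L ih =>
    rw [Finset.prod_Icc_succ_top (by omega), ih]
    have h : ((L : ℝ) + 1) ≠ 0 := by positivity
    push_cast
    field_simp

lemma factor_ge_one (m n j i : ℕ) (hm : 1 ≤ m) (hi : 1 ≤ i) :
    1 ≤ ((i * (m + n) + 1 + j : ℕ) : ℝ) ^ 2 / ((i * n + (i - 1) * m + 1 + j : ℕ) : ℝ) ^ 2 := by
  have hD : (0 : ℝ) < ((i * n + (i - 1) * m + 1 + j : ℕ) : ℝ) := by
    have : 0 < i * n + (i - 1) * m + 1 + j := by omega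
    exact_mod_cast this
  have hle : ((i * n + (i - 1) * m + 1 + j : ℕ) : ℝ) ≤ ((i * (m + n) + 1 + j : ℕ) : ℝ) := by
    have : i * n + (i - 1) * m + 1 + j ≤ i * (m + n) + 1 + j := by
      have h1 : (i - 1) * m ≤ i * m := Nat.mul_le_mul_right _ (by omega)
      have h2 : i * (m + n) = i * m + i * n := by ring
      omega
    exact_mod_cast this
  rw [one_le_div (by positivity)]
  exact pow_le_pow_left₀ hD.le hle 2

lemma factor_le_pow (m n j i : ℕ) (hm : 1 ≤ m) (hi : 1 ≤ i) :
    ((i * (m + n) + 1 + j : ℕ) : ℝ) ^ 2 / ((i * n + (i - 1) * m + 1 + j : ℕ) : ℝ) ^ 2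
      ≤ (((i : ℝ) + 1) / (i : ℝ)) ^ (2 * m) := by
  obtain ⟨i', rfl⟩ : ∃ i', i = i' + 1 := ⟨i - 1, by omega⟩
  set D : ℕ := (i' + 1) * n + (i' + 1 - 1) * m + 1 + j with hDdef
  have hDR : (0 : ℝ) < (D : ℕ) := by
    have : 0 < D := by omega
    exact_mod_cast this
  have hN : (((i' + 1) * (m + n) + 1 + j : ℕ) : ℝ) = (D : ℝ) + m := by
    have : (i' + 1) * (m + n) + 1 + j = D + m := by
      simp only [hDdef, Nat.add_sub_cancel]
      ring
    rw [this]; push_cast; ring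
  have hiR : (0 : ℝ) < ((i' + 1 : ℕ) : ℝ) := by positivity
  have hiD : ((i' + 1 : ℕ) : ℝ) ≤ (D : ℝ) := by
    have : i' + 1 ≤ D := by
      have h1 : i' * 1 ≤ i' * m := Nat.mul_le_mul_left _ hm
      simp only [hDdef, Nat.add_sub_cancel]
      omega
    exact_mod_cast this
  set x : ℝ := ((i' + 1 : ℕ) : ℝ) with hx
  have hx0 : (0 : ℝ) < x := hiR
  have step1 : ((D : ℝ) + m) / D ≤ (1 + 1 / x) ^ m := by
    have h1 : ((D : ℝ) + m) / D = 1 + m * (1 / D) := by field_simp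
    have h2 : (m : ℝ) * (1 / D) ≤ m * (1 / x) := by
      have := one_div_le_one_div_of_le hx0 hiD
      have hm0 : (0 : ℝ) ≤ m := by positivity
      nlinarith
    have h3 : 1 + (m : ℝ) * (1 / x) ≤ (1 + 1 / x) ^ m :=
      one_add_mul_le_pow (le_trans (by norm_num : (-2 : ℝ) ≤ 0) (by positivity)) m
    linarith
  have step2 : (1 + 1 / x) = (x + 1) / x := by field_simp
  rw [hN]
  have hrw : ((D : ℝ) + m) ^ 2 / (D : ℝ) ^ 2 = (((D : ℝ) + m) / D) ^ 2 := (div_pow _ _ 2).symm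
  rw [hrw, mul_comm 2 m, pow_mul]
  apply pow_le_pow_left₀ (by positivity)
  rw [← step2]
  exact step1

theorem bergman_norm_series_summable_iff (m n j : ℕ) (hm : 1 ≤ m) (hj : j ≤ m - 1)
    (c : ℂ) :
    (‖c‖ < 1 → Summable (fun k : ℕ =>
      ‖c‖ ^ (2 * (k + 1)) *
        (∏ i ∈ Finset.Icc 1 (k + 1),
          ((i * (m + n) + 1 + j : ℕ) : ℝ) ^ 2 /
            ((i * n + (i - 1) * m + 1 + j : ℕ) : ℝ) ^ 2) *
        (1 / (((k + 1) * (m + n) + 1 : ℕ) : ℝ)))) ∧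
    (1 ≤ ‖c‖ → ¬ Summable (fun k : ℕ =>
      ‖c‖ ^ (2 * (k + 1)) *
        (∏ i ∈ Finset.Icc 1 (k + 1),
          ((i * (m + n) + 1 + j : ℕ) : ℝ) ^ 2 /
            ((i * n + (i - 1) * m + 1 + j : ℕ) : ℝ) ^ 2) *
        (1 / (((k + 1) * (m + n) + 1 : ℕ) : ℝ)))) := by
  constructor
  · -- summable case
    intro hc
    have hr : ‖(‖c‖ ^ 2 : ℝ)‖ < 1 := by
      rw [Real.norm_eq_abs, _root_.abs_of_nonneg (by positivity)]
      nlinarith [norm_nonneg c]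
    have hs : Summable (fun k : ℕ => (k : ℝ) ^ (2 * m) * (‖c‖ ^ 2) ^ k) :=
      summable_pow_mul_geometric_of_norm_lt_one (2 * m) hr
    have hs1 : Summable (fun k : ℕ => ((k + 1 : ℕ) : ℝ) ^ (2 * m) * (‖c‖ ^ 2) ^ (k + 1)) :=
      hs.comp_injective (add_left_injective 1)
    have hs2 : Summable (fun k : ℕ =>
        (2 : ℝ) ^ (2 * m) * (((k + 1 : ℕ) : ℝ) ^ (2 * m) * (‖c‖ ^ 2) ^ (k + 1))) :=
      hs1.mul_left _
    apply Summable.of_nonneg_of_le _ _ hs2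
    · intro k
      refine mul_nonneg (mul_nonneg (by positivity) ?_) (by positivity)
      exact Finset.prod_nonneg fun i _ => by positivity
    · intro k
      have hA : ‖c‖ ^ (2 * (k + 1)) = (‖c‖ ^ 2) ^ (k + 1) := by rw [pow_mul]
      have hprodnn : (0 : ℝ) ≤ ∏ i ∈ Finset.Icc 1 (k + 1),
          ((i * (m + n) + 1 + j : ℕ) : ℝ) ^ 2 / ((i * n + (i - 1) * m + 1 + j : ℕ) : ℝ) ^ 2 :=
        Finset.prod_nonneg fun i _ => by positivity
      have hP : (∏ i ∈ Finset.Icc 1 (k + 1),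
          ((i * (m + n) + 1 + j : ℕ) : ℝ) ^ 2 / ((i * n + (i - 1) * m + 1 + j : ℕ) : ℝ) ^ 2)
          ≤ ((k : ℝ) + 2) ^ (2 * m) := by
        calc (∏ i ∈ Finset.Icc 1 (k + 1),
            ((i * (m + n) + 1 + j : ℕ) : ℝ) ^ 2 / ((i * n + (i - 1) * m + 1 + j : ℕ) : ℝ) ^ 2)
            ≤ ∏ i ∈ Finset.Icc 1 (k + 1), (((i : ℝ) + 1) / (i : ℝ)) ^ (2 * m) :=
              Finset.prod_le_prod (fun i _ => by positivity)
                (fun i hi => factor_le_pow m n j i hm (Finset.mem_Icc.mp hi).1)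
          _ = (∏ i ∈ Finset.Icc 1 (k + 1), (((i : ℝ) + 1) / (i : ℝ))) ^ (2 * m) := by
              rw [Finset.prod_pow]
          _ = (((k + 1 : ℕ) : ℝ) + 1) ^ (2 * m) := by rw [telescope_prod]
          _ = ((k : ℝ) + 2) ^ (2 * m) := by push_cast; ring
      have hP2 : ((k : ℝ) + 2) ^ (2 * m) ≤ (2 : ℝ) ^ (2 * m) * ((k : ℝ) + 1) ^ (2 * m) := by
        rw [← mul_pow]
        exact pow_le_pow_left₀ (by positivity) (by linarith) _
      have hinv : 1 / (((k + 1) * (m + n) + 1 : ℕ) : ℝ) ≤ 1 := by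
        have hpos : (0 : ℝ) < (((k + 1) * (m + n) + 1 : ℕ) : ℝ) := by
          have : 0 < (k + 1) * (m + n) + 1 := by omega
          exact_mod_cast this
        rw [div_le_one hpos]
        exact_mod_cast (show 1 ≤ (k + 1) * (m + n) + 1 by omega)
      have hinvnn : (0 : ℝ) ≤ 1 / (((k + 1) * (m + n) + 1 : ℕ) : ℝ) := by positivity
      have hmain : ‖c‖ ^ (2 * (k + 1)) *
          (∏ i ∈ Finset.Icc 1 (k + 1),
            ((i * (m + n) + 1 + j : ℕ) : ℝ) ^ 2 / ((i * n + (i - 1) * m + 1 + j : ℕ) : ℝ) ^ 2) *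
          (1 / (((k + 1) * (m + n) + 1 : ℕ) : ℝ))
          ≤ (‖c‖ ^ 2) ^ (k + 1) * ((2 : ℝ) ^ (2 * m) * ((k : ℝ) + 1) ^ (2 * m)) * 1 := by
        rw [hA]
        refine mul_le_mul (mul_le_mul le_rfl (hP.trans hP2) hprodnn (by positivity)) hinv
          hinvnn (by positivity)
      calc _ ≤ (‖c‖ ^ 2) ^ (k + 1) * ((2 : ℝ) ^ (2 * m) * ((k : ℝ) + 1) ^ (2 * m)) * 1 := hmain
        _ = (2 : ℝ) ^ (2 * m) * (((k + 1 : ℕ) : ℝ) ^ (2 * m) * (‖c‖ ^ 2) ^ (k + 1)) := by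
            push_cast; ring
  · -- divergent case
    intro hc hsum
    have hmn1 : (1 : ℝ) ≤ ((m + n : ℕ) : ℝ) := by exact_mod_cast (show 1 ≤ m + n by omega)
    have hmn0 : (0 : ℝ) < ((m + n : ℕ) : ℝ) := by linarith
    have key : ∀ k : ℕ, ((m + n : ℕ) : ℝ)⁻¹ * (1 / ((k : ℝ) + 2)) ≤
        ‖c‖ ^ (2 * (k + 1)) *
          (∏ i ∈ Finset.Icc 1 (k + 1),
            ((i * (m + n) + 1 + j : ℕ) : ℝ) ^ 2 / ((i * n + (i - 1) * m + 1 + j : ℕ) : ℝ) ^ 2) *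
          (1 / (((k + 1) * (m + n) + 1 : ℕ) : ℝ)) := by
      intro k
      have hA : (1 : ℝ) ≤ ‖c‖ ^ (2 * (k + 1)) := one_le_pow₀ hc
      have hP : (1 : ℝ) ≤ ∏ i ∈ Finset.Icc 1 (k + 1),
          ((i * (m + n) + 1 + j : ℕ) : ℝ) ^ 2 / ((i * n + (i - 1) * m + 1 + j : ℕ) : ℝ) ^ 2 := by
        calc (1 : ℝ) = ∏ i ∈ Finset.Icc 1 (k + 1), 1 := by simp
          _ ≤ _ := Finset.prod_le_prod (fun i _ => zero_le_one)
              (fun i hi => factor_ge_one m n j i hm (Finset.mem_Icc.mp hi).1)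
      have hNpos : (0 : ℝ) < (((k + 1) * (m + n) + 1 : ℕ) : ℝ) := by
        have : 0 < (k + 1) * (m + n) + 1 := by omega
        exact_mod_cast this
      have h1 : (((k + 1) * (m + n) + 1 : ℕ) : ℝ) ≤ ((m + n : ℕ) : ℝ) * ((k : ℝ) + 2) := by
        have hnat : (k + 1) * (m + n) + 1 ≤ (m + n) * (k + 2) := by
          calc (k + 1) * (m + n) + 1 = (m + n) * (k + 1) + 1 := by ring
            _ ≤ (m + n) * (k + 1) + (m + n) := by omega
            _ = (m + n) * (k + 2) := by ring
        exact_mod_cast hnat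
      have hinv2 : ((m + n : ℕ) : ℝ)⁻¹ * (1 / ((k : ℝ) + 2)) ≤
          1 / (((k + 1) * (m + n) + 1 : ℕ) : ℝ) := by
        have h2 : ((m + n : ℕ) : ℝ)⁻¹ * (1 / ((k : ℝ) + 2)) =
            1 / (((m + n : ℕ) : ℝ) * ((k : ℝ) + 2)) := by
          rw [one_div, one_div, ← mul_inv]
        rw [h2]
        exact one_div_le_one_div_of_le hNpos h1
      have hinvnn : (0 : ℝ) ≤ 1 / (((k + 1) * (m + n) + 1 : ℕ) : ℝ) := by positivity
      nlinarith [mul_le_mul hA hP (by linarith) (by linarith : (0:ℝ) ≤ ‖c‖ ^ (2 * (k + 1)))]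
    have hsmall : Summable (fun k : ℕ => ((m + n : ℕ) : ℝ)⁻¹ * (1 / ((k : ℝ) + 2))) :=
      Summable.of_nonneg_of_le (fun k => by positivity) key hsum
    have hne : ((m + n : ℕ) : ℝ) ≠ 0 := ne_of_gt hmn0
    have h2 : Summable (fun k : ℕ => 1 / ((k : ℝ) + 2)) := by
      have := hsmall.mul_left ((m + n : ℕ) : ℝ)
      refine this.congr fun k => ?_
      field_simp
    have h3 : Summable (fun k : ℕ => 1 / (k : ℝ)) := by
      rw [← summable_nat_add_iff 2]
      refine h2.congr fun k => ?_
      push_cast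
      ring
    exact Real.not_summable_one_div_natCast h3
end

section
/- Let α, β ∈ ℂ with α ≠ 0. The polynomial p(z) = α z² + β z + 1 has no zeros in the closed unit disk if and only if |α| < 1 and 1 − |α|² > |α β̄ − β|. -/
private lemma conj_sq_norm (z : ℂ) : z * (starRingEnd ℂ) z = ((‖z‖ ^ 2 : ℝ) : ℂ) := by
  rw [Complex.mul_conj]; norm_cast; rw [Complex.normSq_eq_norm_sq]

private lemma key_identity (r₁ r₂ : ℂ) :
    (r₁ + r₂) * (starRingEnd ℂ) (r₁ * r₂) - (starRingEnd ℂ) (r₁ + r₂)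
      = (starRingEnd ℂ) r₂ * ((‖r₁‖ ^ 2 - 1 : ℝ) : ℂ)
        + (starRingEnd ℂ) r₁ * ((‖r₂‖ ^ 2 - 1 : ℝ) : ℂ) := by
  have h1 := conj_sq_norm r₁
  have h2 := conj_sq_norm r₂
  rw [map_mul, map_add]
  push_cast at h1 h2 ⊢
  linear_combination (starRingEnd ℂ) r₂ * h1 + (starRingEnd ℂ) r₁ * h2

private lemma norm_lower (A B : ℂ) : ‖A‖ - ‖B‖ ≤ ‖B + A‖ := by
  have h := norm_add_le (B + A) (-B)
  rw [show B + A + -B = A by ring, norm_neg] at h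
  linarith

private lemma core_iff (r₁ r₂ : ℂ) :
    (1 < ‖r₁‖ ∧ 1 < ‖r₂‖) ↔
      (1 < ‖r₁ * r₂‖ ∧
        ‖(r₁ + r₂) * (starRingEnd ℂ) (r₁ * r₂) - (starRingEnd ℂ) (r₁ + r₂)‖
          < ‖r₁ * r₂‖ ^ 2 - 1) := by
  obtain ⟨x, hx⟩ : ∃ x, ‖r₁‖ = x := ⟨_, rfl⟩
  obtain ⟨y, hy⟩ : ∃ y, ‖r₂‖ = y := ⟨_, rfl⟩
  have hxy : ‖r₁ * r₂‖ = x * y := by rw [norm_mul, hx, hy]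
  have hid := key_identity r₁ r₂
  rw [hx, hy] at hid
  have hA : ‖(starRingEnd ℂ) r₁ * ((y ^ 2 - 1 : ℝ) : ℂ)‖ = x * |y ^ 2 - 1| := by
    rw [norm_mul, RCLike.norm_conj, Complex.norm_real, Real.norm_eq_abs, hx]
  have hB : ‖(starRingEnd ℂ) r₂ * ((x ^ 2 - 1 : ℝ) : ℂ)‖ = y * |x ^ 2 - 1| := by
    rw [norm_mul, RCLike.norm_conj, Complex.norm_real, Real.norm_eq_abs, hy]
  have hx0 : 0 ≤ x := hx ▸ norm_nonneg _
  have hy0 : 0 ≤ y := hy ▸ norm_nonneg _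
  rw [hx, hy, hxy, hid]
  constructor
  · rintro ⟨h1, h2⟩
    refine ⟨by nlinarith, ?_⟩
    have hle := norm_add_le ((starRingEnd ℂ) r₂ * ((x ^ 2 - 1 : ℝ) : ℂ))
      ((starRingEnd ℂ) r₁ * ((y ^ 2 - 1 : ℝ) : ℂ))
    rw [hA, hB, abs_of_pos (by nlinarith : (0:ℝ) < y ^ 2 - 1),
      abs_of_pos (by nlinarith : (0:ℝ) < x ^ 2 - 1)] at hle
    nlinarith [mul_pos (mul_pos (by nlinarith : (0:ℝ) < x * y - 1)
      (by linarith : (0:ℝ) < x - 1)) (by linarith : (0:ℝ) < y - 1)]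
  · rintro ⟨hp, hlt⟩
    have hxpos : 0 < x := by nlinarith
    have hypos : 0 < y := by nlinarith
    have h1 : 1 < x := by
      by_contra hc
      push_neg at hc
      have hy1 : 1 < y := by nlinarith
      have hlb := norm_lower ((starRingEnd ℂ) r₁ * ((y ^ 2 - 1 : ℝ) : ℂ))
        ((starRingEnd ℂ) r₂ * ((x ^ 2 - 1 : ℝ) : ℂ))
      rw [hA, hB, abs_of_pos (by nlinarith : (0:ℝ) < y ^ 2 - 1),
        abs_of_nonpos (by nlinarith : x ^ 2 - 1 ≤ 0)] at hlb
      nlinarith [mul_nonneg (mul_nonneg (by nlinarith : (0:ℝ) ≤ x * y - 1)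
        (by linarith : (0:ℝ) ≤ 1 - x)) (by linarith : (0:ℝ) ≤ y - 1)]
    have h2 : 1 < y := by
      by_contra hc
      push_neg at hc
      have hx1 : 1 < x := by nlinarith
      have hlb' := norm_lower ((starRingEnd ℂ) r₂ * ((x ^ 2 - 1 : ℝ) : ℂ))
        ((starRingEnd ℂ) r₁ * ((y ^ 2 - 1 : ℝ) : ℂ))
      rw [show (starRingEnd ℂ) r₁ * ((y ^ 2 - 1 : ℝ) : ℂ) +
            (starRingEnd ℂ) r₂ * ((x ^ 2 - 1 : ℝ) : ℂ)
          = (starRingEnd ℂ) r₂ * ((x ^ 2 - 1 : ℝ) : ℂ) +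
            (starRingEnd ℂ) r₁ * ((y ^ 2 - 1 : ℝ) : ℂ) from add_comm _ _] at hlb'
      rw [hA, hB, abs_of_pos (by nlinarith : (0:ℝ) < x ^ 2 - 1),
        abs_of_nonpos (by nlinarith : y ^ 2 - 1 ≤ 0)] at hlb'
      nlinarith [mul_nonneg (mul_nonneg (by nlinarith : (0:ℝ) ≤ x * y - 1)
        (by linarith : (0:ℝ) ≤ x - 1)) (by linarith : (0:ℝ) ≤ 1 - y)]
    exact ⟨h1, h2⟩

theorem schur_cohn_quadratic_no_zeros_iff (α β : ℂ) (ha : α ≠ 0) :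
    (∀ z : ℂ, ‖z‖ ≤ 1 → α * z ^ 2 + β * z + 1 ≠ 0) ↔
      (‖α‖ < 1 ∧ ‖α * (starRingEnd ℂ) β - β‖ < 1 - ‖α‖ ^ 2) := by
  obtain ⟨d, hd⟩ : ∃ d : ℂ, d ^ 2 = β ^ 2 - 4 * α :=
    IsAlgClosed.exists_pow_nat_eq _ two_pos
  have h2a : (2 : ℂ) * α ≠ 0 := by simp [ha]
  obtain ⟨r₁, hr1⟩ : ∃ r, r = (-β + d) / (2 * α) := ⟨_, rfl⟩
  obtain ⟨r₂, hr2⟩ : ∃ r, r = (-β - d) / (2 * α) := ⟨_, rfl⟩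
  have hprod : α * (r₁ * r₂) = 1 := by
    rw [hr1, hr2]
    field_simp
    linear_combination -hd
  have hsum : β = -α * (r₁ + r₂) := by
    rw [hr1, hr2]
    field_simp
    ring
  have hfac : ∀ z : ℂ, α * z ^ 2 + β * z + 1 = α * (z - r₁) * (z - r₂) := by
    intro z
    linear_combination z * hsum - hprod
  have hzeros : (∀ z : ℂ, ‖z‖ ≤ 1 → α * z ^ 2 + β * z + 1 ≠ 0) ↔ (1 < ‖r₁‖ ∧ 1 < ‖r₂‖) := by
    constructor
    · intro h
      constructor
      · by_contra hc
        push_neg at hc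
        exact h r₁ hc (by rw [hfac]; ring)
      · by_contra hc
        push_neg at hc
        exact h r₂ hc (by rw [hfac]; ring)
    · rintro ⟨h1, h2⟩ z hz hvz
      rw [hfac] at hvz
      rcases mul_eq_zero.1 hvz with h | h
      · rcases mul_eq_zero.1 h with h | h
        · exact ha h
        · rw [sub_eq_zero] at h
          rw [h] at hz
          linarith
      · rw [sub_eq_zero] at h
        rw [h] at hz
        linarith
  obtain ⟨P, hP⟩ : ∃ P, P = r₁ * r₂ := ⟨_, rfl⟩
  obtain ⟨S, hS⟩ : ∃ S, S = r₁ + r₂ := ⟨_, rfl⟩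
  have hprod' : α * P = 1 := by rw [hP]; exact hprod
  have hsum' : β = -α * S := by rw [hS]; exact hsum
  have hPne : P ≠ 0 := by
    intro h
    rw [h, mul_zero] at hprod'
    exact zero_ne_one hprod'
  have hnP : ‖α‖ * ‖P‖ = 1 := by rw [← norm_mul, hprod', norm_one]
  have hPpos : 0 < ‖P‖ := norm_pos_iff.mpr hPne
  have hP2pos : 0 < ‖P‖ ^ 2 := by positivity
  have hconj : (starRingEnd ℂ) α * (starRingEnd ℂ) P = 1 := by
    rw [← map_mul, hprod', map_one]
  have hkey : ‖α * (starRingEnd ℂ) β - β‖ * ‖P‖ ^ 2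
      = ‖S * (starRingEnd ℂ) P - (starRingEnd ℂ) S‖ := by
    have hprodid : (α * (starRingEnd ℂ) β - β) * (P * (starRingEnd ℂ) P)
        = S * (starRingEnd ℂ) P - (starRingEnd ℂ) S := by
      have hcb : (starRingEnd ℂ) β = -(starRingEnd ℂ) α * (starRingEnd ℂ) S := by
        rw [hsum']; simp [map_mul]
      rw [hcb, hsum']
      linear_combination (S * (starRingEnd ℂ) P - (starRingEnd ℂ) S) * hprod'
        - (starRingEnd ℂ) S * (α * P) * hconj
    calc ‖α * (starRingEnd ℂ) β - β‖ * ‖P‖ ^ 2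
        = ‖(α * (starRingEnd ℂ) β - β) * (P * (starRingEnd ℂ) P)‖ := by
          rw [norm_mul, norm_mul, RCLike.norm_conj]; ring
      _ = ‖S * (starRingEnd ℂ) P - (starRingEnd ℂ) S‖ := by rw [hprodid]
  rw [hzeros, core_iff r₁ r₂, ← hP, ← hS]
  have hfirst : 1 < ‖P‖ ↔ ‖α‖ < 1 := by
    constructor
    · intro h
      nlinarith [norm_nonneg α]
    · intro h
      nlinarith [norm_nonneg α]
  have hsecond : ‖S * (starRingEnd ℂ) P - (starRingEnd ℂ) S‖ < ‖P‖ ^ 2 - 1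
      ↔ ‖α * (starRingEnd ℂ) β - β‖ < 1 - ‖α‖ ^ 2 := by
    have h2 : (1 - ‖α‖ ^ 2) * ‖P‖ ^ 2 = ‖P‖ ^ 2 - 1 := by nlinarith
    rw [← hkey, ← h2]
    exact mul_lt_mul_iff_of_pos_right hP2pos
  rw [hfirst, hsecond]
end

section
/- Let α, β, γ ∈ ℂ with α ≠ 0, and suppose |α| ≠ |γ| and (|α|² − |γ|²)² ≠ |α β̄ − β γ̄|². Then the number of zeros of p(z) = α z² + β z + γ inside the open unit disk 𝔻 equals 2 − N(1, |α|² − |γ|², (|α|² − |γ|²)² − |α β̄ − β γ̄|²), where N(a₀, a₁, a₂) is the number of sign changes in the sequence (a₀, a₁, a₂). -/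
private theorem sc_key (A u v W : ℝ) (hA : 0 < A) (hu : 0 ≤ u) (hW : 0 < W)
    (hu1 : u ≠ 1) (hv1 : v ≠ 1) (n1 d : ℝ) (hn1 : n1 ≠ 0)
    (e1 : n1 = A * (1 - u*v)) (e2 : n1^2 - d = A^2*((u-1)*(v-1))*W) :
    ((if u < 1 then 1 else 0) + (if v < 1 then 1 else 0) : ℕ)
      = 2 - ((if n1 < 0 then 1 else 0) + (if n1*(n1^2-d) < 0 then 1 else 0)) := by
  have hA2 : (0:ℝ) < A^2 := by positivity
  rcases hu1.lt_or_gt with h|h <;> rcases hv1.lt_or_gt with h'|h'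
  · have huv : u * v < 1 := lt_of_le_of_lt (mul_le_of_le_one_right hu h'.le) h
    have hp : 0 < n1 := by rw [e1]; exact mul_pos hA (by linarith)
    have hd : 0 < n1^2 - d := by
      rw [e2]; exact mul_pos (mul_pos hA2 (by nlinarith)) hW
    rw [if_pos h, if_pos h', if_neg (not_lt.mpr hp.le),
      if_neg (not_lt.mpr (mul_pos hp hd).le)]
  · have hd : n1^2 - d < 0 := by
      rw [e2]
      exact mul_neg_of_neg_of_pos (mul_neg_of_pos_of_neg hA2
        (mul_neg_of_neg_of_pos (by linarith) (by linarith))) hW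
    rcases hn1.lt_or_gt with hn|hn
    · rw [if_pos h, if_neg (not_lt.mpr h'.le), if_pos hn,
        if_neg (not_lt.mpr (mul_pos_of_neg_of_neg hn hd).le)]
    · rw [if_pos h, if_neg (not_lt.mpr h'.le), if_neg (not_lt.mpr hn.le),
        if_pos (mul_neg_of_pos_of_neg hn hd)]
  · have hd : n1^2 - d < 0 := by
      rw [e2]
      exact mul_neg_of_neg_of_pos (mul_neg_of_pos_of_neg hA2
        (mul_neg_of_pos_of_neg (by linarith) (by linarith))) hW
    rcases hn1.lt_or_gt with hn|hn
    · rw [if_neg (not_lt.mpr h.le), if_pos h', if_pos hn,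
        if_neg (not_lt.mpr (mul_pos_of_neg_of_neg hn hd).le)]
    · rw [if_neg (not_lt.mpr h.le), if_pos h', if_neg (not_lt.mpr hn.le),
        if_pos (mul_neg_of_pos_of_neg hn hd)]
  · have huv : 1 < u * v := by nlinarith
    have hn : n1 < 0 := by rw [e1]; exact mul_neg_of_pos_of_neg hA (by linarith)
    have hd : 0 < n1^2 - d := by
      rw [e2]; exact mul_pos (mul_pos hA2 (by nlinarith)) hW
    rw [if_neg (not_lt.mpr h.le), if_neg (not_lt.mpr h'.le), if_pos hn,
      if_pos (mul_neg_of_neg_of_pos hn hd)]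

private theorem sc_identity (α z₁ z₂ : ℂ) :
    (Complex.normSq α * (1 - Complex.normSq z₁ * Complex.normSq z₂))^2
      - Complex.normSq (α * (starRingEnd ℂ) (α*(-z₁-z₂))
          - (α*(-z₁-z₂)) * (starRingEnd ℂ) (α*(z₁*z₂)))
    = Complex.normSq α^2 * ((Complex.normSq z₁ - 1)*(Complex.normSq z₂ - 1))
        * Complex.normSq (z₁ * (starRingEnd ℂ) z₂ - 1) := by
  apply Complex.ofReal_injective
  push_cast
  simp only [← Complex.mul_conj]
  simp only [map_mul, map_sub, map_add, map_neg, map_one, Complex.conj_conj]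
  ring

open scoped Classical in
theorem schur_cohn_quadratic_zero_count (α β γ : ℂ) (ha : α ≠ 0)
    (h1 : ‖α‖ ≠ ‖γ‖)
    (h2 : (‖α‖ ^ 2 - ‖γ‖ ^ 2) ^ 2 ≠
      ‖α * (starRingEnd ℂ) β - β * (starRingEnd ℂ) γ‖ ^ 2) :
    Multiset.countP (fun z => ‖z‖ < 1)
        (Polynomial.roots
          (Polynomial.C α * Polynomial.X ^ 2 + Polynomial.C β * Polynomial.X +
            Polynomial.C γ)) =
      2 - ((if ‖α‖ ^ 2 - ‖γ‖ ^ 2 < 0 then 1 else 0) +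
        (if (‖α‖ ^ 2 - ‖γ‖ ^ 2) * ((‖α‖ ^ 2 - ‖γ‖ ^ 2) ^ 2 -
            ‖α * (starRingEnd ℂ) β - β * (starRingEnd ℂ) γ‖ ^ 2) < 0
          then 1 else 0)) := by
  have nsq : ∀ z : ℂ, ‖z‖^2 = Complex.normSq z := fun z => by
    rw [Complex.sq_norm]
  set p : Polynomial ℂ := Polynomial.C α * Polynomial.X ^ 2
    + Polynomial.C β * Polynomial.X + Polynomial.C γ with hpdef
  have hdeg : p.natDegree = 2 := Polynomial.natDegree_quadratic ha
  have hsplit := IsAlgClosed.splits p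
  have hcard : p.roots.card = 2 := by
    rw [Polynomial.splits_iff_card_roots.mp hsplit, hdeg]
  obtain ⟨z₁, z₂, hz⟩ := Multiset.card_eq_two.mp hcard
  have hlc : p.leadingCoeff = α := Polynomial.leadingCoeff_quadratic ha
  have hp := hsplit.eq_prod_roots
  rw [hlc, hz] at hp
  simp only [Multiset.insert_eq_cons, Multiset.map_cons, Multiset.map_singleton,
    Multiset.prod_cons, Multiset.prod_singleton] at hp
  rw [hpdef] at hp
  have hq : (Polynomial.C α * ((Polynomial.X - Polynomial.C z₁)
        * (Polynomial.X - Polynomial.C z₂)) : Polynomial ℂ)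
      = Polynomial.C α * Polynomial.X ^ 2 + Polynomial.C (α * (-z₁ - z₂)) * Polynomial.X
        + Polynomial.C (α * (z₁ * z₂)) := by
    simp only [map_mul, map_sub, map_neg]; ring
  rw [hq] at hp
  have hb : β = α * (-z₁ - z₂) := by
    have h := congrArg (fun q => Polynomial.coeff q 1) hp
    simpa using h
  have hg : γ = α * (z₁ * z₂) := by
    have h := congrArg (fun q => Polynomial.coeff q 0) hp
    simpa using h
  have hA : 0 < Complex.normSq α := Complex.normSq_pos.mpr ha
  have e1 : ‖α‖^2 - ‖γ‖^2
      = Complex.normSq α * (1 - Complex.normSq z₁ * Complex.normSq z₂) := by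
    rw [nsq, nsq, hg, Complex.normSq_mul, Complex.normSq_mul]; ring
  have e2 : (‖α‖^2 - ‖γ‖^2)^2 - ‖α * (starRingEnd ℂ) β - β * (starRingEnd ℂ) γ‖^2
      = Complex.normSq α^2 * ((Complex.normSq z₁ - 1)*(Complex.normSq z₂ - 1))
        * Complex.normSq (z₁ * (starRingEnd ℂ) z₂ - 1) := by
    rw [e1, nsq, hb, hg]; exact sc_identity α z₁ z₂
  have hn1 : ‖α‖^2 - ‖γ‖^2 ≠ 0 := by
    refine sub_ne_zero.mpr fun hh => h1 ?_
    exact (pow_left_inj₀ (norm_nonneg _) (norm_nonneg _) two_ne_zero).mp hh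
  have hne : Complex.normSq α^2 * ((Complex.normSq z₁ - 1)*(Complex.normSq z₂ - 1))
      * Complex.normSq (z₁ * (starRingEnd ℂ) z₂ - 1) ≠ 0 := by
    rw [← e2]; exact sub_ne_zero.mpr h2
  have hW : 0 < Complex.normSq (z₁ * (starRingEnd ℂ) z₂ - 1) :=
    (Complex.normSq_nonneg _).lt_of_ne' (by
      intro h0; exact hne (by rw [h0, mul_zero]))
  have huv1 : (Complex.normSq z₁ - 1)*(Complex.normSq z₂ - 1) ≠ 0 := by
    intro h0; exact hne (by rw [h0, mul_zero, zero_mul])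
  have hu1 : Complex.normSq z₁ ≠ 1 :=
    sub_ne_zero.mp (left_ne_zero_of_mul huv1)
  have hv1 : Complex.normSq z₂ ≠ 1 :=
    sub_ne_zero.mp (right_ne_zero_of_mul huv1)
  have hlt : ∀ z : ℂ, (‖z‖ < 1 ↔ Complex.normSq z < 1) := fun z => by
    rw [← nsq]
    constructor <;> intro h <;> nlinarith [norm_nonneg z]
  have hcount : Multiset.countP (fun z => ‖z‖ < 1) ({z₁, z₂} : Multiset ℂ)
      = ((if Complex.normSq z₁ < 1 then 1 else 0)
        + (if Complex.normSq z₂ < 1 then 1 else 0)) := by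
    have hss : ({z₁, z₂} : Multiset ℂ) = z₁ ::ₘ z₂ ::ₘ 0 := rfl
    rw [hss, Multiset.countP_cons, Multiset.countP_cons, Multiset.countP_zero, zero_add,
      add_comm]
    congr 1 <;> exact if_congr (hlt _) rfl rfl
  rw [hz, hcount]
  exact sc_key (Complex.normSq α) (Complex.normSq z₁) (Complex.normSq z₂)
    (Complex.normSq (z₁ * (starRingEnd ℂ) z₂ - 1)) hA (Complex.normSq_nonneg _) hW hu1 hv1
    _ _ hn1 e1 e2
end

section
/- For n ≥ 1 and 0 ≤ k ≤ n, the set Ω^n_k = { z ∈ ℂ^n : the monic polynomial t^n + z₁ t^{n−1} + ⋯ + z_n has no zeros on the unit circle and exactly k zeros (with multiplicity) in the open unit disk 𝔻 } is path-connected. -/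
open Polynomial

lemma sum_coeff_aux (n : ℕ) (z : Fin n → ℂ) (j : ℕ) :
    (∑ i : Fin n, C (z i) * X ^ (n - 1 - (i:ℕ))).coeff j =
      if h : j < n then z ⟨n - 1 - j, by omega⟩ else 0 := by
  rw [finset_sum_coeff]
  simp only [coeff_C_mul, coeff_X_pow]
  split
  case isTrue h =>
    rw [Finset.sum_eq_single (⟨n-1-j, by omega⟩ : Fin n)]
    · simp only [mul_ite, mul_one, mul_zero]
      rw [if_pos (by omega)]
    · intro i _ hne
      rw [if_neg, mul_zero]
      intro hc
      apply hne
      have := i.2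
      apply Fin.ext
      simp only []
      omega
    · intro h; exact absurd (Finset.mem_univ _) h
  case isFalse h =>
    apply Finset.sum_eq_zero
    intro i _
    rw [if_neg (by have := i.2; omega), mul_zero]

lemma workhorse (n : ℕ) (hn : 1 ≤ n) (p : ℂ[X]) (hm : p.Monic) (hd : p.natDegree = n) :
    p = X ^ n + ∑ i : Fin n, C (p.coeff (n - 1 - (i:ℕ))) * X ^ (n - 1 - (i:ℕ)) := by
  ext j
  rw [coeff_add, coeff_X_pow, sum_coeff_aux]
  rcases lt_trichotomy j n with h | rfl | h
  · rw [dif_pos h, if_neg (by omega), zero_add]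
    congr 1
    simp only [Fin.val_mk]
    omega
  · rw [dif_neg (by omega), if_pos rfl, add_zero]
    rw [← hd]
    exact hm.coeff_natDegree
  · rw [dif_neg (by omega), if_neg (by omega), add_zero]
    exact coeff_eq_zero_of_natDegree_lt (by rw [hd]; omega)

lemma cont_coeff_prod {T : Type*} [TopologicalSpace T] (L : List (T → ℂ))
    (hL : ∀ f ∈ L, Continuous f) (j : ℕ) :
    Continuous fun t => ((L.map fun f => (X - C (f t) : Polynomial ℂ)).prod).coeff j := by
  induction L generalizing j with
  | nil => simp only [List.map_nil, List.prod_nil]; exact continuous_const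
  | cons f L ih =>
    have hf := hL f List.mem_cons_self
    have hL' : ∀ g ∈ L, Continuous g := fun g hg => hL g (List.mem_cons_of_mem _ hg)
    have key : ∀ t, (((f::L).map fun g => (X - C (g t) : Polynomial ℂ)).prod).coeff j
        = (if j = 0 then 0 else ((L.map fun g => (X - C (g t) : Polynomial ℂ)).prod).coeff (j-1))
          - f t * ((L.map fun g => (X - C (g t) : Polynomial ℂ)).prod).coeff j := by
      intro t
      rw [List.map_cons, List.prod_cons, sub_mul, coeff_sub, coeff_C_mul]
      congr 1
      cases j with
      | zero => simp [mul_coeff_zero]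
      | succ m => rw [coeff_X_mul]; simp
    simp only [key]
    refine Continuous.sub ?_ (hf.mul (ih hL' j))
    split_ifs with h
    · exact continuous_const
    · exact ih hL' (j-1)

lemma joined_in_ball {a : ℂ} (ha : ‖a‖ < 1) : JoinedIn {w : ℂ | ‖w‖ < 1} a 0 := by
  refine ⟨⟨⟨fun t => ((1 - t.1 : ℝ)) • a, ?_⟩, ?_, ?_⟩, ?_⟩
  · exact (continuous_const.sub continuous_subtype_val).smul continuous_const
  · simp
  · simp
  · intro t
    have ht0 := t.2.1
    have ht1 := t.2.2
    have h0 : (0:ℝ) ≤ ‖a‖ := norm_nonneg a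
    show ‖((1 - t.1 : ℝ)) • a‖ < 1
    rw [norm_smul, Real.norm_eq_abs, abs_of_nonneg (by linarith)]
    nlinarith

lemma joined_in_outer {a b : ℂ} (ha : 1 < ‖a‖) (hb : 1 < ‖b‖) :
    JoinedIn {w : ℂ | 1 < ‖w‖} a b := by
  have sph : IsPathConnected (Metric.sphere (0:ℂ) 2) :=
    isPathConnected_sphere (by rw [Complex.rank_real_complex]; norm_num) 0 (by norm_num)
  have seg : ∀ (x : ℂ), 1 < ‖x‖ → JoinedIn {w : ℂ | 1 < ‖w‖} x ((2 * ‖x‖⁻¹ : ℝ) • x) := by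
    intro x hx
    have hx0 : (0:ℝ) < ‖x‖ := by linarith
    refine ⟨⟨⟨fun t => (((1 - t.1) + t.1 * (2 * ‖x‖⁻¹) : ℝ)) • x, ?_⟩, ?_, ?_⟩, ?_⟩
    · exact ((continuous_const.sub continuous_subtype_val).add
        (continuous_subtype_val.mul continuous_const)).smul continuous_const
    · simp
    · simp
    · intro t
      have ht0 := t.2.1
      have ht1 := t.2.2
      have hinv : ‖x‖⁻¹ * ‖x‖ = 1 := inv_mul_cancel₀ hx0.ne'
      have hpos : (0:ℝ) < ‖x‖⁻¹ := inv_pos.mpr hx0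
      show 1 < ‖(((1 - t.1) + t.1 * (2 * ‖x‖⁻¹) : ℝ)) • x‖
      rw [norm_smul, Real.norm_eq_abs, abs_of_nonneg (by nlinarith)]
      have h2 : (t.1 * (2 * ‖x‖⁻¹)) * ‖x‖ = 2 * t.1 := by
        rw [mul_assoc, mul_assoc, inv_mul_cancel₀ hx0.ne']
        ring
      rw [add_mul, h2]
      rcases eq_or_lt_of_le ht0 with h | h
      · rw [← h]
        simp only [sub_zero, one_mul, mul_zero, add_zero]
        linarith
      · linarith [mul_nonneg (by linarith : (0:ℝ) ≤ 1 - t.1) (by linarith : (0:ℝ) ≤ ‖x‖ - 1)]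
  have hmem : ∀ (x : ℂ), 1 < ‖x‖ → ((2 * ‖x‖⁻¹ : ℝ) • x) ∈ Metric.sphere (0:ℂ) 2 := by
    intro x hx
    have hx0 : (0:ℝ) < ‖x‖ := by linarith
    rw [Metric.mem_sphere, dist_zero_right, norm_smul, Real.norm_eq_abs,
      abs_of_nonneg (by positivity), mul_assoc, inv_mul_cancel₀ hx0.ne', mul_one]
  have hsub : Metric.sphere (0:ℂ) 2 ⊆ {w : ℂ | 1 < ‖w‖} := by
    intro w hw
    rw [Metric.mem_sphere, dist_zero_right] at hw
    show 1 < ‖w‖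
    rw [hw]; norm_num
  have mid : JoinedIn {w : ℂ | 1 < ‖w‖} ((2 * ‖a‖⁻¹ : ℝ) • a) ((2 * ‖b‖⁻¹ : ℝ) • b) :=
    (sph.joinedIn _ (hmem a ha) _ (hmem b hb)).mono hsub
  exact ((seg a ha).trans mid).trans (seg b hb).symm

noncomputable def tgt (l : ℂ) : ℂ := if ‖l‖ < 1 then 0 else 2

lemma root_path (l : ℂ) (hl : ‖l‖ ≠ 1) :
    ∃ γ : Path l (tgt l), ∀ t, ‖γ t‖ ≠ 1 ∧ (‖γ t‖ < 1 ↔ ‖l‖ < 1) := by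
  by_cases h : ‖l‖ < 1
  · have htgt : tgt l = 0 := if_pos h
    rw [htgt]
    obtain ⟨γ, hγ⟩ := joined_in_ball h
    refine ⟨γ, fun t => ?_⟩
    have := hγ t
    simp only [Set.mem_setOf_eq] at this
    exact ⟨by linarith, by tauto⟩
  · have htgt : tgt l = 2 := if_neg h
    rw [htgt]
    have h1 : 1 < ‖l‖ := lt_of_le_of_ne (not_lt.mp h) (Ne.symm hl)
    have h2 : 1 < ‖(2:ℂ)‖ := by norm_num
    obtain ⟨γ, hγ⟩ := joined_in_outer h1 h2
    refine ⟨γ, fun t => ?_⟩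
    have := hγ t
    simp only [Set.mem_setOf_eq] at this
    constructor
    · linarith
    · constructor
      · intro hc; linarith
      · intro hc; linarith

lemma Pz_facts (n : ℕ) (hn : 1 ≤ n) (z : Fin n → ℂ) :
    ((X:ℂ[X])^n + ∑ i : Fin n, C (z i) * X^(n-1-(i:ℕ))).Monic ∧
    ((X:ℂ[X])^n + ∑ i : Fin n, C (z i) * X^(n-1-(i:ℕ))).natDegree = n := by
  have hs : (∑ i : Fin n, C (z i) * X^(n-1-(i:ℕ)) : ℂ[X]).degree < ((X:ℂ[X])^n).degree := by
    rw [degree_X_pow]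
    apply lt_of_le_of_lt (degree_sum_le _ _)
    rw [Finset.sup_lt_iff (by exact_mod_cast WithBot.bot_lt_coe n)]
    intro i _
    apply lt_of_le_of_lt (degree_C_mul_X_pow_le _ _)
    have := i.2
    exact_mod_cast Nat.cast_lt.mpr (by omega : n - 1 - (i:ℕ) < n)
  have hdeg : ((X:ℂ[X])^n + ∑ i : Fin n, C (z i) * X^(n-1-(i:ℕ))).degree = n := by
    rw [degree_add_eq_left_of_degree_lt hs, degree_X_pow]
  exact ⟨(monic_X_pow n).add_of_left hs, natDegree_eq_of_degree_eq_some hdeg⟩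

lemma base_monic (k m : ℕ) : ((X:ℂ[X])^k * (X - C 2)^m).Monic :=
  (monic_X_pow k).mul ((monic_X_sub_C 2).pow m)

lemma base_natDegree (k m : ℕ) : ((X:ℂ[X])^k * (X - C 2)^m).natDegree = k + m := by
  rw [(monic_X_pow k).natDegree_mul ((monic_X_sub_C 2).pow m), natDegree_X_pow,
    natDegree_pow, natDegree_X_sub_C, mul_one]

lemma base_roots (k m : ℕ) : ((X:ℂ[X])^k * (X - C 2)^m).roots
    = Multiset.replicate k 0 + Multiset.replicate m 2 := by
  rw [roots_mul (base_monic k m).ne_zero, roots_pow, roots_pow, roots_X, roots_X_sub_C]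
  congr 1 <;> exact Multiset.nsmul_singleton _ _

open scoped Classical in
lemma base_countP (k m : ℕ) :
    Multiset.countP (fun w : ℂ => ‖w‖ < 1)
      (Multiset.replicate k 0 + Multiset.replicate m 2) = k := by
  rw [Multiset.countP_add]
  have h1 : Multiset.countP (fun w : ℂ => ‖w‖ < 1) (Multiset.replicate k 0) = k := by
    rw [Multiset.countP_eq_card.mpr]
    · simp
    · intro a ha
      rw [Multiset.eq_of_mem_replicate ha]
      simp
  have h2 : Multiset.countP (fun w : ℂ => ‖w‖ < 1) (Multiset.replicate m 2) = 0 := by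
    rw [Multiset.countP_eq_zero]
    intro a ha
    rw [Multiset.eq_of_mem_replicate ha]
    norm_num
  rw [h1, h2]; ring

lemma base_eval (k m : ℕ) (w : ℂ) (hw : ‖w‖ = 1) :
    eval w ((X:ℂ[X])^k * (X - C 2)^m) ≠ 0 := by
  have hw0 : w ≠ 0 := by intro h; rw [h] at hw; simp at hw
  have hw2 : w - 2 ≠ 0 := by
    intro h
    have : w = 2 := by linear_combination h
    rw [this] at hw
    norm_num at hw
  simp only [eval_mul, eval_pow, eval_X, eval_sub, eval_C]
  exact mul_ne_zero (pow_ne_zero _ hw0) (pow_ne_zero _ hw2)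

open scoped Classical in
lemma multiset_eq_replicate_add (s : Multiset ℂ) (h : ∀ y ∈ s, y = 0 ∨ y = 2) :
    s = Multiset.replicate (Multiset.countP (fun y => ‖y‖ < 1) s) 0
      + Multiset.replicate (Multiset.card s - Multiset.countP (fun y => ‖y‖ < 1) s) 2 := by
  have key : ∀ y ∈ s, (‖y‖ < 1 ↔ y = 0) := by
    intro y hy
    rcases h y hy with rfl | rfl
    · simp
    · norm_num
  have hf1 : s.filter (fun y => ‖y‖ < 1)
      = Multiset.replicate (Multiset.countP (fun y => ‖y‖ < 1) s) 0 := by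
    rw [Multiset.countP_eq_card_filter]
    apply Multiset.eq_replicate_card.mpr
    intro b hb
    have := Multiset.mem_filter.mp hb
    exact (key b this.1).mp this.2
  have hf2 : s.filter (fun y => ¬ ‖y‖ < 1)
      = Multiset.replicate (Multiset.card s - Multiset.countP (fun y => ‖y‖ < 1) s) 2 := by
    have hcard : Multiset.card (s.filter (fun y => ¬ ‖y‖ < 1))
        = Multiset.card s - Multiset.countP (fun y => ‖y‖ < 1) s := by
      have := Multiset.filter_add_not (fun y => ‖y‖ < 1) s
      have hc := congrArg Multiset.card this
      rw [Multiset.card_add] at hc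
      rw [Multiset.countP_eq_card_filter]
      omega
    rw [← hcard]
    apply Multiset.eq_replicate_card.mpr
    intro b hb
    have hb' := Multiset.mem_filter.mp hb
    rcases h b hb'.1 with rfl | rfl
    · exact absurd (by simp) hb'.2
    · rfl
  conv_lhs => rw [← Multiset.filter_add_not (fun y => ‖y‖ < 1) s]
  rw [hf1, hf2]

open scoped Classical in
theorem omega_n_k_pathConnected (n k : ℕ) (hn : 1 ≤ n) (hk : k ≤ n) :
    IsPathConnected {z : Fin n → ℂ |
      (∀ w : ℂ, ‖w‖ = 1 →
        Polynomial.eval w (Polynomial.X ^ n +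
          ∑ i : Fin n, Polynomial.C (z i) * Polynomial.X ^ (n - 1 - (i : ℕ))) ≠ 0) ∧
      Multiset.countP (fun w => ‖w‖ < 1)
        (Polynomial.roots (Polynomial.X ^ n +
          ∑ i : Fin n, Polynomial.C (z i) * Polynomial.X ^ (n - 1 - (i : ℕ)))) = k} := by
  -- the base point
  set q : ℂ[X] := X^k * (X - C 2)^(n-k) with hq
  have hqm : q.Monic := base_monic k (n-k)
  have hqd : q.natDegree = n := by rw [hq, base_natDegree]; omega
  set z₀ : Fin n → ℂ := fun i => q.coeff (n-1-(i:ℕ)) with hz₀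
  have hqeq : (X:ℂ[X])^n + ∑ i : Fin n, C (z₀ i) * X^(n-1-(i:ℕ)) = q :=
    (workhorse n hn q hqm hqd).symm
  have hz₀S : z₀ ∈ {z : Fin n → ℂ |
      (∀ w : ℂ, ‖w‖ = 1 →
        Polynomial.eval w (Polynomial.X ^ n +
          ∑ i : Fin n, Polynomial.C (z i) * Polynomial.X ^ (n - 1 - (i : ℕ))) ≠ 0) ∧
      Multiset.countP (fun w => ‖w‖ < 1)
        (Polynomial.roots (Polynomial.X ^ n +
          ∑ i : Fin n, Polynomial.C (z i) * Polynomial.X ^ (n - 1 - (i : ℕ)))) = k} := by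
    constructor
    · intro w hw
      rw [hqeq, hq]
      exact base_eval k (n-k) w hw
    · rw [hqeq, hq, base_roots]
      exact base_countP k (n-k)
  refine ⟨z₀, hz₀S, ?_⟩
  intro y hy
  obtain ⟨hy1, hy2⟩ := hy
  -- the polynomial of y and its roots
  set p : ℂ[X] := X^n + ∑ i : Fin n, C (y i) * X^(n-1-(i:ℕ)) with hp
  obtain ⟨hpm, hpd⟩ := Pz_facts n hn y
  have hcard : Multiset.card p.roots = n := by
    rw [splits_iff_card_roots.mp (IsAlgClosed.splits p), hpd]
  set l : List ℂ := p.roots.toList with hl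
  have hlcoe : (↑l : Multiset ℂ) = p.roots := Multiset.coe_toList _
  have hllen : l.length = n := by
    rw [← Multiset.coe_card, hlcoe, hcard]
  have hcirc : ∀ x ∈ l, ‖x‖ ≠ 1 := by
    intro x hx h1
    have hxr : x ∈ p.roots := Multiset.mem_toList.mp hx
    exact hy1 x h1 (mem_roots'.mp hxr).2
  -- choose paths for each root
  have hch : ∀ x : {x // x ∈ l}, ∃ γ : Path x.1 (tgt x.1),
      ∀ t, ‖γ t‖ ≠ 1 ∧ (‖γ t‖ < 1 ↔ ‖x.1‖ < 1) :=
    fun x => root_path x.1 (hcirc x.1 x.2)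
  choose G hG using hch
  set m : unitInterval → Multiset ℂ :=
    fun t => (↑(l.attach.map fun x => (G x) t) : Multiset ℂ) with hm
  set Q : unitInterval → ℂ[X] := fun t => ((m t).map fun a => X - C a).prod with hQ
  have hQm : ∀ t, (Q t).Monic :=
    fun t => monic_multiset_prod_of_monic _ _ (fun a _ => monic_X_sub_C a)
  have hmcard : ∀ t, Multiset.card (m t) = n := by
    intro t
    simp only [hm]
    rw [Multiset.coe_card, List.length_map, List.length_attach, hllen]
  have hQd : ∀ t, (Q t).natDegree = n := by
    intro t
    simp only [hQ]
    rw [natDegree_multiset_prod_X_sub_C_eq_card, hmcard]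
  have hQroots : ∀ t, (Q t).roots = m t := by
    intro t
    simp only [hQ]
    exact roots_multiset_prod_X_sub_C _
  have hmnorm : ∀ t, ∀ w ∈ m t, ‖w‖ ≠ 1 := by
    intro t w hw
    simp only [hm, Multiset.mem_coe, List.mem_map] at hw
    obtain ⟨x, hx, rfl⟩ := hw
    exact ((hG x) t).1
  -- count of roots inside the disk is k throughout
  have hcount_aux : ∀ (f : {x // x ∈ l} → ℂ), (∀ x, (‖f x‖ < 1 ↔ ‖x.1‖ < 1)) →
      Multiset.countP (fun w : ℂ => ‖w‖ < 1) (↑(l.attach.map f) : Multiset ℂ) = k := by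
    intro f hf
    have h1 : (↑(l.attach.map f) : Multiset ℂ)
        = Multiset.map f (l.attach : Multiset {x // x ∈ l}) := by
      rw [Multiset.map_coe]
    rw [h1, Multiset.countP_map]
    have h2 : (Multiset.filter (fun a => ‖f a‖ < 1) (l.attach : Multiset {x // x ∈ l}))
        = Multiset.filter (fun a => ‖a.1‖ < 1) (l.attach : Multiset {x // x ∈ l}) := by
      apply Multiset.filter_congr
      intro x _
      exact hf x
    rw [h2, ← Multiset.countP_eq_card_filter]
    have h3 : (↑l : Multiset ℂ)
        = Multiset.map Subtype.val (l.attach : Multiset {x // x ∈ l}) := by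
      rw [Multiset.map_coe, List.attach_map_subtype_val]
    have h4 : Multiset.countP (fun w : ℂ => ‖w‖ < 1) (↑l : Multiset ℂ) = k := by
      rw [hlcoe]
      exact hy2
    rw [h3, Multiset.countP_map, ← Multiset.countP_eq_card_filter] at h4
    exact h4
  have hmcount : ∀ t, Multiset.countP (fun w : ℂ => ‖w‖ < 1) (m t) = k := by
    intro t
    exact hcount_aux (fun x => (G x) t) (fun x => ((hG x) t).2)
  -- endpoints
  have hQ0 : Q 0 = p := by
    have hm0 : m 0 = p.roots := by
      simp only [hm]
      have : (l.attach.map fun x => (G x) 0) = l.attach.map Subtype.val := by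
        apply List.map_congr_left
        intro x _
        exact (G x).source
      rw [this, List.attach_map_subtype_val, hlcoe]
    simp only [hQ]
    rw [hm0]
    exact ((IsAlgClosed.splits p).eq_prod_roots_of_monic hpm).symm
  have hQ1 : Q 1 = q := by
    have hm1 : m 1 = Multiset.replicate k 0 + Multiset.replicate (n-k) 2 := by
      have h02 : ∀ w ∈ m 1, w = 0 ∨ w = 2 := by
        intro w hw
        simp only [hm, Multiset.mem_coe, List.mem_map] at hw
        obtain ⟨x, hx, rfl⟩ := hw
        rw [(G x).target]
        unfold tgt
        split_ifs
        · exact Or.inl rfl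
        · exact Or.inr rfl
      have := multiset_eq_replicate_add (m 1) h02
      rwa [hmcount 1, hmcard 1] at this
    simp only [hQ]
    rw [hm1, Multiset.map_add, Multiset.prod_add, Multiset.map_replicate,
      Multiset.map_replicate, Multiset.prod_replicate, Multiset.prod_replicate,
      C_0, sub_zero, hq]
  -- the path in coefficient space
  set Lc : List (unitInterval → ℂ) := l.attach.map (fun x => ((G x : Path _ _) : unitInterval → ℂ))
    with hLc
  have hQlist : ∀ t, Q t = ((Lc.map fun f => (X - C (f t) : ℂ[X])).prod) := by
    intro t
    simp only [hQ, hm, hLc]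
    rw [Multiset.map_coe, Multiset.prod_coe, List.map_map, List.map_map]
    rfl
  have hLcont : ∀ f ∈ Lc, Continuous f := by
    intro f hf
    rw [hLc] at hf
    obtain ⟨x, _, rfl⟩ := List.mem_map.mp hf
    exact (G x).continuous
  have hcont : Continuous fun t => (fun i : Fin n => (Q t).coeff (n-1-(i:ℕ))) := by
    apply continuous_pi
    intro i
    have := cont_coeff_prod Lc hLcont (n-1-(i:ℕ))
    apply this.congr
    intro t
    rw [hQlist t]
  refine (JoinedIn.symm ⟨⟨⟨fun t => (fun i : Fin n => (Q t).coeff (n-1-(i:ℕ))), hcont⟩, ?_, ?_⟩, ?_⟩)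
  · -- source : coefficients of Q 0 = p give back y
    funext i
    show (Q 0).coeff (n-1-(i:ℕ)) = y i
    rw [hQ0, hp, coeff_add, coeff_X_pow, sum_coeff_aux, dif_pos (by omega : n-1-(i:ℕ) < n),
      if_neg (by have := i.2; omega)]
    have hi : n - 1 - (n - 1 - (i:ℕ)) = (i:ℕ) := by have := i.2; omega
    rw [zero_add]
    congr 1
    exact Fin.ext (by simp [hi])
  · -- target
    funext i
    show (Q 1).coeff (n-1-(i:ℕ)) = z₀ i
    rw [hQ1, hz₀]
  · -- membership along the path
    intro t
    show (∀ w : ℂ, ‖w‖ = 1 →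
        Polynomial.eval w (Polynomial.X ^ n +
          ∑ i : Fin n, Polynomial.C ((Q t).coeff (n-1-(i:ℕ))) * Polynomial.X ^ (n - 1 - (i : ℕ))) ≠ 0) ∧
      Multiset.countP (fun w => ‖w‖ < 1)
        (Polynomial.roots (Polynomial.X ^ n +
          ∑ i : Fin n, Polynomial.C ((Q t).coeff (n-1-(i:ℕ))) * Polynomial.X ^ (n - 1 - (i : ℕ)))) = k
    have hPQ : (X:ℂ[X])^n + ∑ i : Fin n, C ((Q t).coeff (n-1-(i:ℕ))) * X^(n-1-(i:ℕ)) = Q t :=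
      (workhorse n hn (Q t) (hQm t) (hQd t)).symm
    constructor
    · intro w hw hev
      rw [hPQ] at hev
      have hwr : w ∈ (Q t).roots := mem_roots'.mpr ⟨(hQm t).ne_zero, hev⟩
      rw [hQroots t] at hwr
      exact hmnorm t w hwr hw
    · rw [hPQ, hQroots t]
      exact hmcount t
end
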